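/- Assume that for every x ∈ X and u ∈ U, sup_{w ∈ W} l(x, u, w) ≥ 0, and that for every y ∈ Y the preimage h^{-1}{y} ⊂ X is a finite indexed set of at most M elements. Fix N, an initial measurement y_0, a strategy π generating inputs u_t, and a measurement sequence y_1,...,y_N, and define r_N recursively by r_0 = 0 and r_t = g(r_{t-1}, y_t, y_{t-1}, u_{t-1}). Then for every t ≤ N and every x ∈ X, ρ_{t+1}(x, y_{0:t}, u_{0:t}) = sup over i ∈ {1,...,M} and w ∈ W of { l(ξ_t^i, u_t, w) + r_t^i : x = f(ξ_t^i, u_t, w) }, where (ξ_t^i)_{i=1}^M enumerates h^{-1}{y_t}. -/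

import Mathlib

open scoped BigOperators

noncomputable section

variable {X U W Y : Type*}

/-- The worst-case history `ρ_t(x, y_{0:t-1}, u_{0:t-1})`: the supremum (in `ℝ ∪ {-∞}`,
with `sSup ∅ = ⊥`) of accumulated stage costs over all disturbance sequences and initial
states whose trajectory reaches `x` at time `t` and is consistent with the measurements. -/
noncomputable def rho (f : X → U → W → X) (h : X → Y) (l : X → U → W → ℝ)
    (t : ℕ) (x : X) (ys : ℕ → Y) (us : ℕ → U) : EReal :=
  sSup { c : EReal | ∃ (xs : ℕ → X) (ws : ℕ → W),
    xs t = x ∧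
    (∀ τ < t, xs (τ + 1) = f (xs τ) (us τ) (ws τ)) ∧
    (∀ τ < t, h (xs τ) = ys τ) ∧
    c = ((∑ τ ∈ Finset.range t, l (xs τ) (us τ) (ws τ) : ℝ) : EReal) }

/-- Inputs generated causally by a strategy `π` from a measurement sequence:
`u_t = μ_t(y_{0:t}, u_{0:t-1})`. -/
noncomputable def inputsOf (π : ℕ → List Y → List U → U) (ys : ℕ → Y) : ℕ → U
  | t => π t ((List.range (t + 1)).map ys) (List.ofFn fun i : Fin t => inputsOf π ys i)
  decreasing_by exact i.isLt

/-- Closed loop: state, list of past measurements and list of past inputs. -/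
noncomputable def loop (f : X → U → W → X) (h : X → Y)
    (π : ℕ → List Y → List U → U) (x0 : X) (ws : ℕ → W) : ℕ → X × List Y × List U
  | 0 => (x0, [h x0], [])
  | t + 1 =>
    let p := loop f h π x0 ws t
    let u := π t p.2.1 p.2.2
    let x' := f p.1 u (ws t)
    (x', p.2.1 ++ [h x'], p.2.2 ++ [u])

/-- Closed-loop state `x_t`. -/
noncomputable def cstate (f : X → U → W → X) (h : X → Y)
    (π : ℕ → List Y → List U → U) (x0 : X) (ws : ℕ → W) (t : ℕ) : X :=
  (loop f h π x0 ws t).1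

/-- Closed-loop input `u_t = μ_t(y_{0:t}, u_{0:t-1})`. -/
noncomputable def cinput (f : X → U → W → X) (h : X → Y)
    (π : ℕ → List Y → List U → U) (x0 : X) (ws : ℕ → W) (t : ℕ) : U :=
  π t (loop f h π x0 ws t).2.1 (loop f h π x0 ws t).2.2

/-- The worst-case `N`-horizon performance `J_π^N(y_0)`. -/
noncomputable def Jcost (f : X → U → W → X) (h : X → Y) (l : X → U → W → ℝ)
    (π : ℕ → List Y → List U → U) (N : ℕ) (y0 : Y) : EReal :=
  sSup { c : EReal | ∃ (x0 : X) (ws : ℕ → W), h x0 = y0 ∧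
    c = ((∑ t ∈ Finset.range (N + 1),
      l (cstate f h π x0 ws t) (cinput f h π x0 ws t) (ws t) : ℝ) : EReal) }

/-- The information-state update `g` (componentwise), for preimages of `h`
enumerated by `ξ : Y → Fin M → X`. -/
noncomputable def gup {M : ℕ} (f : X → U → W → X) (l : X → U → W → ℝ)
    (ξ : Y → Fin M → X) (r : Fin M → EReal) (ynext y : Y) (u : U) : Fin M → EReal :=
  fun i => sSup { c : EReal | ∃ (j : Fin M) (w : W),
    ξ ynext i = f (ξ y j) u w ∧ c = (l (ξ y j) u w : EReal) + r j }

/-- The information state `r_t`, defined recursively by `r_0 = 0` and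
`r_t = g(r_{t-1}, y_t, y_{t-1}, u_{t-1})`. -/
noncomputable def rvec {M : ℕ} (f : X → U → W → X) (l : X → U → W → ℝ)
    (ξ : Y → Fin M → X) (ys : ℕ → Y) (us : ℕ → U) : ℕ → Fin M → EReal
  | 0 => 0
  | t + 1 => gup f l ξ (rvec f l ξ ys us t) (ys (t + 1)) (ys t) (us t)

/-- The Bellman operator `B_u V(r, y) = sup_{v ∈ Y} V(g(r, v, y, u), v)`. -/
noncomputable def Bu {M : ℕ} (f : X → U → W → X) (l : X → U → W → ℝ)
    (ξ : Y → Fin M → X) (V : (Fin M → EReal) → Y → EReal) (u : U)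
    (r : Fin M → EReal) (y : Y) : EReal :=
  ⨆ v : Y, V (gup f l ξ r v y u) v

/-- The Bellman operator `B V(r, y) = inf_{u ∈ U} B_u V(r, y)`. -/
noncomputable def Bop {M : ℕ} (f : X → U → W → X) (l : X → U → W → ℝ)
    (ξ : Y → Fin M → X) (V : (Fin M → EReal) → Y → EReal)
    (r : Fin M → EReal) (y : Y) : EReal :=
  ⨅ u : U, Bu f l ξ V u r y

/-- The value iteration `V_0(r, y) = max_i r^i`, `V_{k+1} = B V_k`. -/
noncomputable def Vseq {M : ℕ} (f : X → U → W → X) (l : X → U → W → ℝ)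
    (ξ : Y → Fin M → X) : ℕ → (Fin M → EReal) → Y → EReal
  | 0 => fun r _ => ⨆ i, r i
  | k + 1 => fun r y => Bop f l ξ (Vseq f l ξ k) r y

/-- The (possibly time-varying) information-state feedback policy
`μ_t(y_{0:t}, u_{0:t-1}) = η_t(r_t, y_t)`, where `r_0 = 0` and
`r_{t+1} = g(r_t, y_{t+1}, y_t, u_t)`. -/
noncomputable def infoStrategyT {M : ℕ} [Nonempty Y] [Nonempty U]
    (f : X → U → W → X) (l : X → U → W → ℝ) (ξ : Y → Fin M → X)
    (η : ℕ → (Fin M → EReal) → Y → U) : ℕ → List Y → List U → U :=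
  fun t ysl usl =>
    η t (rvec f l ξ (fun τ => ysl.getD τ (Classical.arbitrary Y))
          (fun τ => usl.getD τ (Classical.arbitrary U)) (ysl.length - 1))
      (ysl.getD (ysl.length - 1) (Classical.arbitrary Y))

/-- Stationary information-state feedback policy `μ_t(y_{0:t}, u_{0:t-1}) = η(r_t, y_t)`. -/
noncomputable def infoStrategy {M : ℕ} [Nonempty Y] [Nonempty U]
    (f : X → U → W → X) (l : X → U → W → ℝ) (ξ : Y → Fin M → X)
    (η : (Fin M → EReal) → Y → U) : ℕ → List Y → List U → U :=
  infoStrategyT f l ξ (fun _ => η)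

end


lemma rho_zero {X U W Y : Type*} [Nonempty W] (f : X → U → W → X) (h : X → Y)
    (l : X → U → W → ℝ) (x : X) (ys : ℕ → Y) (us : ℕ → U) :
    rho f h l 0 x ys us = 0 := by
  have hset : { c : EReal | ∃ (xs : ℕ → X) (ws : ℕ → W), xs 0 = x ∧
      (∀ τ < 0, xs (τ + 1) = f (xs τ) (us τ) (ws τ)) ∧ (∀ τ < 0, h (xs τ) = ys τ) ∧
      c = ((∑ τ ∈ Finset.range 0, l (xs τ) (us τ) (ws τ) : ℝ) : EReal) } = {0} := by
    ext c
    simp only [Set.mem_setOf_eq, Set.mem_singleton_iff]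
    constructor
    · rintro ⟨xs, ws, -, -, -, rfl⟩; simp
    · rintro rfl
      exact ⟨fun _ => x, fun _ => Classical.arbitrary W,
        rfl, fun τ hτ => (Nat.not_lt_zero τ hτ).elim,
        fun τ hτ => (Nat.not_lt_zero τ hτ).elim, by simp⟩
  rw [rho, hset, sSup_singleton]

lemma rho_succ {X U W Y : Type*} (f : X → U → W → X) (h : X → Y) (l : X → U → W → ℝ)
    (t : ℕ) (x : X) (ys : ℕ → Y) (us : ℕ → U) :
    rho f h l (t + 1) x ys us =
      sSup { c : EReal | ∃ (x' : X) (w : W), h x' = ys t ∧ x = f x' (us t) w ∧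
        c = (l x' (us t) w : EReal) + rho f h l t x' ys us } := by
  apply le_antisymm
  · apply sSup_le
    rintro c ⟨xs, ws, hxt, hdyn, hmeas, rfl⟩
    have hBmem : ((∑ τ ∈ Finset.range t, l (xs τ) (us τ) (ws τ) : ℝ) : EReal)
        ≤ rho f h l t (xs t) ys us := by
      apply le_sSup
      exact ⟨xs, ws, rfl, fun τ hτ => hdyn τ (by omega),
        fun τ hτ => hmeas τ (by omega), rfl⟩
    have hd : ((l (xs t) (us t) (ws t) : EReal) + rho f h l t (xs t) ys us)
        ∈ { c : EReal | ∃ (x' : X) (w : W), h x' = ys t ∧ x = f x' (us t) w ∧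
        c = (l x' (us t) w : EReal) + rho f h l t x' ys us } :=
      ⟨xs t, ws t, hmeas t (by omega), hxt ▸ hdyn t (by omega), rfl⟩
    refine le_trans ?_ (le_sSup hd)
    rw [Finset.sum_range_succ]
    push_cast
    rw [add_comm]
    exact add_le_add le_rfl hBmem
  · apply sSup_le
    rintro c ⟨x', w, hhx, hfx, rfl⟩
    refine EReal.add_le_of_forall_lt fun a ha b hb => ?_
    obtain ⟨c', hc', hbc⟩ := lt_sSup_iff.mp hb
    obtain ⟨xs, ws, hxt, hdyn, hmeas, rfl⟩ := hc'
    set xs' : ℕ → X := fun τ => if τ = t + 1 then x else xs τ with hxs'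
    set ws' : ℕ → W := fun τ => if τ = t then w else ws τ with hws'
    have hmem : ((∑ τ ∈ Finset.range (t+1), l (xs' τ) (us τ) (ws' τ) : ℝ) : EReal)
        ∈ { c : EReal | ∃ (xs : ℕ → X) (ws : ℕ → W), xs (t+1) = x ∧
          (∀ τ < t + 1, xs (τ + 1) = f (xs τ) (us τ) (ws τ)) ∧
          (∀ τ < t + 1, h (xs τ) = ys τ) ∧
          c = ((∑ τ ∈ Finset.range (t+1), l (xs τ) (us τ) (ws τ) : ℝ) : EReal) } := by
      refine ⟨xs', ws', by simp [hxs'], ?_, ?_, rfl⟩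
      · intro τ hτ
        rcases Nat.lt_succ_iff_lt_or_eq.mp hτ with hτ | rfl
        · have h1 : xs' (τ + 1) = xs (τ + 1) := by simp [hxs']; omega
          have h2 : xs' τ = xs τ := by simp [hxs']; omega
          have h3 : ws' τ = ws τ := by simp [hws']; omega
          rw [h1, h2, h3]; exact hdyn τ hτ
        · have h1 : xs' (τ + 1) = x := by simp [hxs']
          have h2 : xs' τ = xs τ := by simp [hxs']
          have h3 : ws' τ = w := by simp [hws']
          rw [h1, h2, h3, hxt]; exact hfx
      · intro τ hτ
        rcases Nat.lt_succ_iff_lt_or_eq.mp hτ with hτ | rfl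
        · have h2 : xs' τ = xs τ := by simp [hxs']; omega
          rw [h2]; exact hmeas τ hτ
        · have h2 : xs' τ = xs τ := by simp [hxs']
          rw [h2, hxt]; exact hhx
    have hsum : (∑ τ ∈ Finset.range (t+1), l (xs' τ) (us τ) (ws' τ) : ℝ)
        = (∑ τ ∈ Finset.range t, l (xs τ) (us τ) (ws τ)) + l x' (us t) w := by
      rw [Finset.sum_range_succ]
      congr 1
      · apply Finset.sum_congr rfl
        intro τ hτ
        have hτ' : τ < t := Finset.mem_range.mp hτ
        have h2 : xs' τ = xs τ := by simp [hxs']; omega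
        have h3 : ws' τ = ws τ := by simp [hws']; omega
        rw [h2, h3]
      · have h2 : xs' t = xs t := by simp [hxs']
        have h3 : ws' t = w := by simp [hws']
        rw [h2, h3, hxt]
    calc a + b ≤ (l x' (us t) w : EReal)
          + ((∑ τ ∈ Finset.range t, l (xs τ) (us τ) (ws τ) : ℝ) : EReal) :=
        add_le_add ha.le hbc.le
      _ = ((∑ τ ∈ Finset.range (t+1), l (xs' τ) (us τ) (ws' τ) : ℝ) : EReal) := by
        rw [hsum]; push_cast; exact (add_comm _ _)
      _ ≤ rho f h l (t + 1) x ys us := le_sSup hmem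

lemma rvec_eq_rho {X U W Y : Type*} [Nonempty W] {M : ℕ}
    (f : X → U → W → X) (h : X → Y) (l : X → U → W → ℝ) (ξ : Y → Fin M → X)
    (hξ : ∀ y : Y, Set.range (ξ y) = {x : X | h x = y})
    (ys : ℕ → Y) (us : ℕ → U) :
    ∀ t (i : Fin M), rvec f l ξ ys us t i = rho f h l t (ξ (ys t) i) ys us := by
  intro t
  induction t with
  | zero => intro i; rw [rho_zero]; rfl
  | succ t ih =>
    intro i
    rw [rho_succ]
    show gup f l ξ (rvec f l ξ ys us t) (ys (t+1)) (ys t) (us t) i = _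
    rw [gup]
    congr 1
    ext c
    simp only [Set.mem_setOf_eq]
    constructor
    · rintro ⟨j, w, hfe, rfl⟩
      have hmemr : ξ (ys t) j ∈ {x : X | h x = ys t} := (hξ (ys t)) ▸ Set.mem_range_self j
      exact ⟨ξ (ys t) j, w, hmemr, hfe, by rw [ih j]⟩
    · rintro ⟨x', w, hhx, hfe, rfl⟩
      have : x' ∈ Set.range (ξ (ys t)) := (hξ (ys t)).symm ▸ hhx
      obtain ⟨j, rfl⟩ := this
      exact ⟨j, w, hfe, by rw [ih j]⟩

/-- Under the positivity assumption on the stage cost and the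
finite-preimage assumption (preimages of `h` enumerated by `ξ : Y → Fin M → X`), the
worst-case history along a measurement sequence `ys` with inputs generated by a strategy
`π` is determined by the finite-dimensional information state `r_t` (with `r_0 = 0`,
`r_t = g(r_{t-1}, y_t, y_{t-1}, u_{t-1})`):
`ρ_{t+1}(x, y_{0:t}, u_{0:t}) = sup_{i, w} { l(ξ_t^i, u_t, w) + r_t^i : x = f(ξ_t^i, u_t, w) }`
for every `t ≤ N`. -/
theorem rho_eq_sup_r {X U W Y : Type*} [Nonempty X] [Nonempty U] [Nonempty W] [Nonempty Y]
    {M : ℕ} (f : X → U → W → X) (h : X → Y) (hsurj : Function.Surjective h)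
    (l : X → U → W → ℝ) (ξ : Y → Fin M → X)
    (pos : ∀ (x : X) (u : U), (0 : EReal) ≤ ⨆ w : W, (l x u w : EReal))
    (hξ : ∀ y : Y, Set.range (ξ y) = {x : X | h x = y})
    (π : ℕ → List Y → List U → U) (N : ℕ) (y0 : Y) (ys : ℕ → Y) (hy0 : ys 0 = y0)
    (t : ℕ) (ht : t ≤ N) (x : X) :
    rho f h l (t + 1) x ys (inputsOf π ys) =
      sSup { c : EReal | ∃ (i : Fin M) (w : W),
        x = f (ξ (ys t) i) (inputsOf π ys t) w ∧
        c = (l (ξ (ys t) i) (inputsOf π ys t) w : EReal)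
            + rvec f l ξ ys (inputsOf π ys) t i } := by
  rw [rho_succ]
  congr 1
  ext c
  simp only [Set.mem_setOf_eq]
  constructor
  · rintro ⟨x', w, hhx, hfx, rfl⟩
    have : x' ∈ Set.range (ξ (ys t)) := (hξ (ys t)).symm ▸ hhx
    obtain ⟨i, rfl⟩ := this
    exact ⟨i, w, hfx, by rw [rvec_eq_rho f h l ξ hξ ys (inputsOf π ys) t i]⟩
  · rintro ⟨i, w, hfx, rfl⟩
    have hmemr : ξ (ys t) i ∈ {x : X | h x = ys t} := (hξ (ys t)) ▸ Set.mem_range_self i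
    exact ⟨ξ (ys t) i, w, hmemr, hfx,
      by rw [rvec_eq_rho f h l ξ hξ ys (inputsOf π ys) t i]⟩
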